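/- Let (T, V) be a rooted stable tree-decomposition of a graph G, t a node of T, P a t-admissible path, and define W_u := V_u ∪ (V(P) ∩ V_{T_u}) for descendants u of t and W_u := V_u otherwise. Then the tree-decomposition (T, (W_u)) is also stable. -/

import Mathlib

open SimpleGraph

universe u

/-- `x` and `y` are joined by a walk in `G` all of whose vertices lie in `S`. -/
def ConnIn {V : Type u} (G : SimpleGraph V) (S : Set V) (x y : V) : Prop :=
  ∃ p : G.Walk x y, ∀ v ∈ p.support, v ∈ S

/-- `S` is a (nonempty) connected vertex set of `G`, i.e. `G[S]` is connected. -/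
def IsConnSet {V : Type u} (G : SimpleGraph V) (S : Set V) : Prop :=
  S.Nonempty ∧ ∀ x ∈ S, ∀ y ∈ S, ConnIn G S x y

/-- A tree-decomposition of `G` over the tree `T`. -/
structure TreeDecomp {V ι : Type u} (G : SimpleGraph V) (T : SimpleGraph ι) where
  isTree : T.IsTree
  bag : ι → Set V
  exists_bag : ∀ v : V, ∃ t, v ∈ bag t
  exists_bag_adj : ∀ ⦃u v : V⦄, G.Adj u v → ∃ t, u ∈ bag t ∧ v ∈ bag t
  bag_sep : ∀ ⦃t₁ t₃ : ι⦄ (p : T.Walk t₁ t₃), p.IsPath → ∀ t₂ ∈ p.support,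
      bag t₁ ∩ bag t₃ ⊆ bag t₂

/-- The union of the bags `B u` over `u ∈ A`. -/
def unionBags {V ι : Type u} (B : ι → Set V) (A : Set ι) : Set V := ⋃ u ∈ A, B u

/-- `s` is a descendant of `t` in the tree `T` rooted at `r`:
`t` lies on the (unique) `r`–`s` path. -/
def Desc {ι : Type u} (T : SimpleGraph ι) (r t s : ι) : Prop :=
  ∃ p : T.Walk r s, p.IsPath ∧ t ∈ p.support

/-- The set of descendants of `t` (the subtree `T_t`). -/
def descSet {ι : Type u} (T : SimpleGraph ι) (r t : ι) : Set ι := {s | Desc T r t s}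

/-- `s` is a child of `t` in the tree `T` rooted at `r`. -/
def IsChild {ι : Type u} (T : SimpleGraph ι) (r t s : ι) : Prop :=
  T.Adj t s ∧ Desc T r t s

/-- The vertex set of the component of `t₁` in `T` minus the edge `t₁t₂`. -/
def Side {ι : Type u} (T : SimpleGraph ι) (t₁ t₂ : ι) : Set ι :=
  {u | ∃ p : T.Walk u t₁, p.IsPath ∧ t₂ ∉ p.support}

/-- The family of bags `B` is stable: for every tree edge `t₁t₂`, both sides
induce connected subgraphs of `G`. -/
def StableBags {V ι : Type u} (G : SimpleGraph V) (T : SimpleGraph ι) (B : ι → Set V) : Prop :=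
  ∀ ⦃t₁ t₂ : ι⦄, T.Adj t₁ t₂ → IsConnSet G (unionBags B (Side T t₁ t₂))

def TreeDecomp.Stable {V ι : Type u} {G : SimpleGraph V} {T : SimpleGraph ι}
    (td : TreeDecomp G T) : Prop :=
  StableBags G T td.bag

/-- `P` is a `t`-admissible path (w.r.t. the root `r` and bags `B`): a shortest
path lying in `V_{T_t}` joining two distinct components of `G[B t]`. -/
structure IsAdmissible {V ι : Type u} (G : SimpleGraph V) (T : SimpleGraph ι)
    (B : ι → Set V) (r t : ι) {x y : V} (P : G.Walk x y) : Prop where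
  isPath : P.IsPath
  support_sub : ∀ v ∈ P.support, v ∈ unionBags B (descSet T r t)
  fst_mem : x ∈ B t
  snd_mem : y ∈ B t
  not_conn : ¬ ConnIn G (B t) x y
  minimal : ∀ ⦃x' y' : V⦄ (Q : G.Walk x' y'), Q.IsPath →
      (∀ v ∈ Q.support, v ∈ unionBags B (descSet T r t)) →
      x' ∈ B t → y' ∈ B t → ¬ ConnIn G (B t) x' y' → P.length ≤ Q.length

/-- The updated bags obtained by adding the path `P` as in `(*)`:
`W_u = V_u ∪ (V(P) ∩ V_{T_u})` for descendants `u` of `t`, and `W_u = V_u` otherwise. -/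
def updatedBag {V ι : Type u} (T : SimpleGraph ι) (B : ι → Set V) (r t : ι)
    {G : SimpleGraph V} {x y : V} (P : G.Walk x y) (u : ι) : Set V :=
  B u ∪ {v | Desc T r t u ∧ v ∈ P.support ∧ v ∈ unionBags B (descSet T r u)}

/-- The tree-width of `G`: the least `k` such that `G` has a tree-decomposition
all of whose bags have at most `k + 1` vertices. -/
noncomputable def treewidth {V : Type u} (G : SimpleGraph V) : ℕ :=
  sInf {k | ∃ (ι : Type u) (T : SimpleGraph ι) (td : TreeDecomp G T),
    ∀ t, (td.bag t).ncard ≤ k + 1}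

/-- A tree-decomposition is connected if every bag is a connected vertex set. -/
def TreeDecomp.IsConn {V ι : Type u} {G : SimpleGraph V} {T : SimpleGraph ι}
    (td : TreeDecomp G T) : Prop :=
  ∀ t, IsConnSet G (td.bag t)

/-- The connected tree-width of `G`. -/
noncomputable def ctw {V : Type u} (G : SimpleGraph V) : ℕ :=
  sInf {k | ∃ (ι : Type u) (T : SimpleGraph ι) (td : TreeDecomp G T),
    td.IsConn ∧ ∀ t, (td.bag t).ncard ≤ k + 1}

/-- The weak connected tree-width of `G`: the least `k` such that `G` has a
tree-decomposition each of whose bags is contained in a connected set of at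
most `k + 1` vertices. -/
noncomputable def wctw {V : Type u} (G : SimpleGraph V) : ℕ :=
  sInf {k | ∃ (ι : Type u) (T : SimpleGraph ι) (td : TreeDecomp G T),
    ∀ t, ∃ X, td.bag t ⊆ X ∧ IsConnSet G X ∧ X.ncard ≤ k + 1}

/-- The characteristic vector over GF(2) of the edge set of a walk. -/
noncomputable def walkChar {V : Type u} {G : SimpleGraph V} {x y : V}
    (p : G.Walk x y) : Sym2 V → ZMod 2 :=
  fun e => by classical exact if e ∈ p.edges then 1 else 0

/-- The characteristic vectors of the cycles of `G` of length at most `ℓ`. -/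
def cycleChars {V : Type u} (G : SimpleGraph V) (ℓ : ℕ) : Set (Sym2 V → ZMod 2) :=
  {f | ∃ (v : V) (p : G.Walk v v), p.IsCycle ∧ p.length ≤ ℓ ∧ f = walkChar p}

/-- The cycles of length at most `ℓ` generate the cycle space of `G` over GF(2). -/
def GeneratesLE {V : Type u} (G : SimpleGraph V) (ℓ : ℕ) : Prop :=
  ∀ ⦃v : V⦄ (p : G.Walk v v), p.IsCycle →
    walkChar p ∈ Submodule.span (ZMod 2) (cycleChars G ℓ)

/-- `ℓ(G)`: the least `ℓ` such that the cycles of length at most `ℓ`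
generate the cycle space of `G`. -/
noncomputable def ellGraph {V : Type u} (G : SimpleGraph V) : ℕ :=
  sInf {ℓ | GeneratesLE G ℓ}

/-- `Γ` is a set of cycles of `G` generating its cycle space over GF(2). -/
def GeneratesSet {V : Type u} (G : SimpleGraph V) (Γ : Set (Σ v : V, G.Walk v v)) : Prop :=
  (∀ c ∈ Γ, c.2.IsCycle) ∧
  ∀ ⦃v : V⦄ (p : G.Walk v v), p.IsCycle →
    walkChar p ∈ Submodule.span (ZMod 2) {f | ∃ c ∈ Γ, f = walkChar c.2}

/-- A bramble: a collection of connected vertex sets, any two of which have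
connected union. -/
def IsBramble {V : Type u} (G : SimpleGraph V) (B : Set (Set V)) : Prop :=
  (∀ S ∈ B, IsConnSet G S) ∧ ∀ S ∈ B, ∀ S' ∈ B, IsConnSet G (S ∪ S')

/-- `X` is a connected cover of the bramble `B`. -/
def IsConnCover {V : Type u} (G : SimpleGraph V) (B : Set (Set V)) (X : Set V) : Prop :=
  IsConnSet G X ∧ ∀ S ∈ B, (X ∩ S).Nonempty

/-- The connected order of a bramble: the least size of a connected cover. -/
noncomputable def connOrder {V : Type u} (G : SimpleGraph V) (B : Set (Set V)) : ℕ :=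
  sInf {n | ∃ X, IsConnCover G B X ∧ X.ncard = n}

/-- The maximum connected order of a bramble of `G`. -/
noncomputable def cbn {V : Type u} (G : SimpleGraph V) : ℕ :=
  sSup {n | ∃ B, IsBramble G B ∧ connOrder G B = n}

/-- A geodesic cycle: a cycle containing a shortest `G`-path between any two
of its vertices. -/
def IsGeodesicCycle {V : Type u} (G : SimpleGraph V) {v : V} (p : G.Walk v v) : Prop :=
  p.IsCycle ∧ ∀ x ∈ p.support, ∀ y ∈ p.support,
    ∃ q : G.Walk x y, q.length = G.dist x y ∧ ∀ e ∈ q.edges, e ∈ p.edges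

/-- The graph obtained from `K_n` by subdividing every edge exactly `k` times:
the edge between `i < j` is replaced by the path
`i, ((i,j),0), ((i,j),1), …, ((i,j),k-1), j`. -/
def subK (n k : ℕ) : SimpleGraph (Fin n ⊕ ({p : Fin n × Fin n // p.1 < p.2} × Fin k)) :=
  SimpleGraph.fromRel fun u v =>
    match u, v with
    | Sum.inl i, Sum.inl j => i < j ∧ k = 0
    | Sum.inl i, Sum.inr (e, c) =>
        (e.val.1 = i ∧ (c : ℕ) = 0) ∨ (e.val.2 = i ∧ (c : ℕ) = k - 1)
    | Sum.inr (e, c), Sum.inr (e', c') => e = e' ∧ (c' : ℕ) = (c : ℕ) + 1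
    | _, _ => False


lemma crossing {ι : Type u} {T : SimpleGraph ι} {t₁ t₂ w w' : ι}
    (hw : w ∈ Side T t₁ t₂) (hw' : w' ∉ Side T t₁ t₂) (π : T.Walk w' w) :
    t₂ ∈ π.support := by
  classical
  obtain ⟨q, hq, hq2⟩ := hw
  have hb : t₂ ∈ (π.append q).bypass.support := by
    by_contra hc
    exact hw' ⟨(π.append q).bypass, (π.append q).bypass_isPath, hc⟩
  have h := Walk.support_bypass_subset _ hb
  rw [Walk.support_append] at h
  rcases List.mem_append.1 h with h | h
  · exact h
  · exact absurd (List.mem_of_mem_tail h) hq2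

lemma desc_side {ι : Type u} {T : SimpleGraph ι} (hac : T.IsAcyclic) {r t t₁ t₂ u s : ι}
    (ht : t ∉ Side T t₁ t₂) (hu : u ∈ Side T t₁ t₂)
    (hdu : Desc T r t u) (hds : Desc T r u s) : s ∈ Side T t₁ t₂ := by
  classical
  by_contra hs
  obtain ⟨p₁, hp₁, htp₁⟩ := hdu
  obtain ⟨p, hp, hup⟩ := hds
  have hpre : (p.takeUntil u hup) = p₁ := by
    have := hac.path_unique ⟨p.takeUntil u hup, hp.takeUntil hup⟩ ⟨p₁, hp₁⟩
    exact congrArg Subtype.val this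
  have htpre : t ∈ (p.takeUntil u hup).support := by rw [hpre]; exact htp₁
  have ht2pre : t₂ ∈ (p.takeUntil u hup).support := by
    have h := crossing hu ht ((p.takeUntil u hup).dropUntil t htpre)
    exact Walk.support_dropUntil_subset _ htpre h
  have ht2suf : t₂ ∈ (p.dropUntil u hup).support := by
    have h := crossing hu hs (p.dropUntil u hup).reverse
    rw [Walk.support_reverse, List.mem_reverse] at h; exact h
  have ht2ne : t₂ ≠ u := by
    rintro rfl
    obtain ⟨q, _, hq2⟩ := hu
    exact hq2 q.start_mem_support
  have hnd := hp.support_nodup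
  rw [← Walk.take_spec p hup, Walk.support_append] at hnd
  have hdisj := (List.nodup_append.1 hnd).2.2
  refine hdisj _ ht2pre _ ?_ rfl
  rw [Walk.support_eq_cons] at ht2suf
  rcases List.mem_cons.1 ht2suf with h | h
  · exact absurd h ht2ne
  · exact h

lemma mem_unionBags {V ι : Type u} {B : ι → Set V} {A : Set ι} {u : ι} {v : V}
    (hu : u ∈ A) (hv : v ∈ B u) : v ∈ unionBags B A := Set.mem_biUnion hu hv

lemma unionBags_exists {V ι : Type u} {B : ι → Set V} {A : Set ι} {v : V}
    (h : v ∈ unionBags B A) : ∃ u ∈ A, v ∈ B u := by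
  simpa [unionBags] using h

/-- adding an admissible path as in `(*)` preserves stability. -/
theorem updated_stable {V ι : Type u} (G : SimpleGraph V) (T : SimpleGraph ι)
    (td : TreeDecomp G T) (hst : td.Stable) (r t : ι) {x y : V} (P : G.Walk x y)
    (hP : IsAdmissible G T td.bag r t P) :
    StableBags G T (updatedBag T td.bag r t P) := by
  classical
  intro t₁ t₂ hadj
  set W := updatedBag T td.bag r t P with hW
  have hU : IsConnSet G (unionBags td.bag (Side T t₁ t₂)) := hst hadj
  have hUU' : unionBags td.bag (Side T t₁ t₂) ⊆ unionBags W (Side T t₁ t₂) := by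
    intro v hv
    obtain ⟨u, hu, hvb⟩ := unionBags_exists hv
    exact mem_unionBags hu (Or.inl hvb)
  by_cases htA : t ∈ Side T t₁ t₂
  · have hPsub : ∀ v ∈ P.support, v ∈ unionBags W (Side T t₁ t₂) := by
      intro v hv
      have hdesc : Desc T r t t := by
        obtain ⟨w⟩ := td.isTree.isConnected.preconnected r t
        exact ⟨w.bypass, w.bypass_isPath, Walk.end_mem_support _⟩
      exact mem_unionBags htA (Or.inr ⟨hdesc, hv, hP.support_sub v hv⟩)
    have hxU : x ∈ unionBags td.bag (Side T t₁ t₂) := mem_unionBags htA hP.fst_mem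
    have hdec : ∀ v ∈ unionBags W (Side T t₁ t₂),
        v ∈ unionBags td.bag (Side T t₁ t₂) ∨ v ∈ P.support := by
      intro v hv
      obtain ⟨u, hu, hvb⟩ := unionBags_exists hv
      rcases hvb with h | ⟨-, h, -⟩
      · exact Or.inl (mem_unionBags hu h)
      · exact Or.inr h
    have hconnx : ∀ a ∈ unionBags W (Side T t₁ t₂),
        ConnIn G (unionBags W (Side T t₁ t₂)) a x := by
      intro a ha
      rcases hdec a ha with h | h
      · obtain ⟨q, hq⟩ := hU.2 a h x hxU
        exact ⟨q, fun v hv => hUU' (hq v hv)⟩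
      · refine ⟨(P.takeUntil a h).reverse, ?_⟩
        intro v hv
        rw [Walk.support_reverse, List.mem_reverse] at hv
        exact hPsub v (Walk.support_takeUntil_subset P h hv)
    refine ⟨⟨x, hUU' hxU⟩, ?_⟩
    intro a ha b hb
    obtain ⟨q₁, h₁⟩ := hconnx a ha
    obtain ⟨q₂, h₂⟩ := hconnx b hb
    refine ⟨q₁.append q₂.reverse, ?_⟩
    intro v hv
    rw [Walk.support_append] at hv
    rcases List.mem_append.1 hv with h | h
    · exact h₁ v h
    · have h' := List.mem_of_mem_tail h
      rw [Walk.support_reverse, List.mem_reverse] at h'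
      exact h₂ v h'
  · have heq : unionBags W (Side T t₁ t₂) = unionBags td.bag (Side T t₁ t₂) := by
      refine Set.Subset.antisymm ?_ hUU'
      intro v hv
      obtain ⟨u, hu, hvb⟩ := unionBags_exists hv
      rcases hvb with h | ⟨hdtu, -, hvs⟩
      · exact mem_unionBags hu h
      · obtain ⟨s, hs, hvBs⟩ := unionBags_exists hvs
        exact mem_unionBags (desc_side td.isTree.IsAcyclic htA hu hdtu hs) hvBs
    rw [heq]
    exact hU
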